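/- Let f(q) = ∑ₙ qⁿ aₙ have radius of convergence R > 0 and let x + 𝕊y ⊂ B(0,R). Then for all I, J ∈ 𝕊, f(x+Jy) = ((1-JI)/2) f(x+Iy) + ((1+JI)/2) f(x-Iy). -/

import Mathlib

local notation "ℍ" => Quaternion ℝ

lemma quat_sq_neg_one {K : ℍ} (hK : K^2 = -1) : K.re = 0 ∧ Quaternion.normSq K = 1 := by
  rw [sq] at hK
  have h := congrArg QuaternionAlgebra.re hK
  have h2 := congrArg QuaternionAlgebra.imI hK
  have h3 := congrArg QuaternionAlgebra.imJ hK
  have h4 := congrArg QuaternionAlgebra.imK hK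
  simp [Quaternion.re_mul, Quaternion.imI_mul, Quaternion.imJ_mul, Quaternion.imK_mul, Quaternion.re_one, Quaternion.imI_one,
    Quaternion.imJ_one, Quaternion.imK_one] at h h2 h3 h4
  have hre : K.re = 0 := by
    by_contra hne
    have e2 : K.imI = 0 := by
      have h' : K.re * K.imI = 0 := by linarith
      exact (mul_eq_zero.mp h').resolve_left hne
    have e3 : K.imJ = 0 := by
      have h' : K.re * K.imJ = 0 := by linarith
      exact (mul_eq_zero.mp h').resolve_left hne
    have e4 : K.imK = 0 := by
      have h' : K.re * K.imK = 0 := by linarith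
      exact (mul_eq_zero.mp h').resolve_left hne
    rw [e2, e3, e4] at h
    nlinarith
  refine ⟨hre, ?_⟩
  rw [Quaternion.normSq_def', hre]
  nlinarith [h, hre]

lemma quat_norm_xyK (x y : ℝ) {K : ℍ} (hK : K^2 = -1) :
    ‖(x : ℍ) + y • K‖ = Real.sqrt (x^2 + y^2) := by
  obtain ⟨hre, hns⟩ := quat_sq_neg_one hK
  rw [norm_eq_sqrt_real_inner, Quaternion.inner_self]
  congr 1
  rw [Quaternion.normSq_def']
  simp [hre]
  have : K.imI^2 + K.imJ^2 + K.imK^2 = 1 := by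
    rw [Quaternion.normSq_def', hre] at hns; nlinarith
  ring_nf
  nlinarith [this]

theorem representation_formula (a : ℕ → ℍ) (R : ℝ) (hR : 0 < R)
    (hconv : ∀ q : ℍ, ‖q‖ < R → Summable (fun n : ℕ => ‖q^n * a n‖))
    (x y : ℝ) (hxy : x^2 + y^2 < R^2) (I J : ℍ) (hI : I^2 = -1) (hJ : J^2 = -1) :
    ∑' n : ℕ, ((x : ℍ) + y • J)^n * a n =
      ((1 - J*I)/2) * ∑' n : ℕ, ((x : ℍ) + y • I)^n * a n +
      ((1 + J*I)/2) * ∑' n : ℕ, ((x : ℍ) - y • I)^n * a n := by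
  set z : ℂ := (x : ℂ) + (y : ℂ) * Complex.I with hz
  have habs : ‖z‖ = Real.sqrt (x^2 + y^2) := Complex.norm_add_mul_I x y
  have hnormlt : Real.sqrt (x^2 + y^2) < R := by
    rw [show R = Real.sqrt (R^2) from (Real.sqrt_sq hR.le).symm]
    exact Real.sqrt_lt_sqrt (by positivity) hxy
  -- power expansion
  have hpow : ∀ (K : ℍ), K^2 = -1 → ∀ n : ℕ, ((x:ℍ) + y • K)^n
      = ((z^n).re : ℍ) + (z^n).im • K := by
    intro K hK n
    have hK' : K * K = -1 := by rw [← sq]; exact hK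
    have h1 : Complex.liftAux K hK' z = (x:ℍ) + y • K := by
      rw [Complex.liftAux_apply]
      simp [hz]
    calc ((x:ℍ) + y • K)^n = Complex.liftAux K hK' z ^ n := by rw [h1]
      _ = Complex.liftAux K hK' (z^n) := (map_pow _ z n).symm
      _ = ((z^n).re : ℍ) + (z^n).im • K := by
          rw [Complex.liftAux_apply]
          norm_num
  -- summability
  have hS1 : Summable (fun n : ℕ => ‖((x:ℍ) + y • I)^n * a n‖) :=
    hconv _ (by rw [quat_norm_xyK x y hI]; exact hnormlt)
  have hbound : ∀ (w : ℕ → ℝ), (∀ n, |w n| ≤ ‖z^n‖) →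
      Summable (fun n : ℕ => (w n : ℍ) * a n) := by
    intro w hw
    apply Summable.of_norm_bounded hS1
    intro n
    rw [norm_mul, norm_mul, norm_pow, Quaternion.norm_coe, quat_norm_xyK x y hI,
      ← habs, ← norm_pow]
    exact mul_le_mul_of_nonneg_right (hw n) (norm_nonneg _)
  have hA : Summable (fun n : ℕ => (((z^n).re : ℝ) : ℍ) * a n) :=
    hbound _ (fun n => Complex.abs_re_le_norm _)
  have hB : Summable (fun n : ℕ => (((z^n).im : ℝ) : ℍ) * a n) :=
    hbound _ (fun n => Complex.abs_im_le_norm _)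
  set A : ℍ := ∑' n : ℕ, (((z^n).re : ℝ) : ℍ) * a n with hAdef
  set B : ℍ := ∑' n : ℕ, (((z^n).im : ℝ) : ℍ) * a n with hBdef
  have key : ∀ (K : ℍ), K^2 = -1 →
      (∑' n : ℕ, ((x:ℍ) + y • K)^n * a n) = A + K * B := by
    intro K hK
    have hterm : ∀ n : ℕ, ((x:ℍ) + y • K)^n * a n
        = (((z^n).re : ℝ) : ℍ) * a n + K * ((((z^n).im : ℝ) : ℍ) * a n) := by
      intro n
      rw [hpow K hK n, add_mul]
      congr 1
      rw [smul_mul_assoc, Quaternion.coe_mul_eq_smul, mul_smul_comm]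
    rw [tsum_congr hterm, hA.tsum_add (Summable.mul_left K hB), tsum_mul_left]
  have hII : I * I = -1 := by rw [← sq]; exact hI
  have hneg : ((x:ℍ) - y • I) = (x:ℍ) + y • (-I) := by
    rw [smul_neg, ← sub_eq_add_neg]
  have hnegsq : (-I)^2 = -1 := by rw [neg_sq]; exact hI
  rw [key J hJ, key I hI]
  simp only [hneg]
  rw [key (-I) hnegsq]
  have expand : (1 - J*I) * (A + I*B) + (1 + J*I) * (A + (-I)*B) = 2*(A + J*B) := by
    have e1 : J * I * (I * B) = -(J * B) := by
      rw [mul_assoc, ← mul_assoc I I B, hII, neg_one_mul, mul_neg]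
    simp only [sub_mul, add_mul, one_mul, mul_add, mul_neg, neg_mul, e1, two_mul]
    abel
  have c2 : ∀ v : ℍ, Commute ((2:ℍ)⁻¹) v := by
    intro v
    have : Commute ((2:ℍ)) v := by
      have := Nat.cast_commute (2:ℕ) v
      simpa using this
    exact this.inv_left₀
  have h2 : ∀ u v : ℍ, u / 2 * v = u * v / 2 := by
    intro u v
    rw [div_eq_mul_inv, div_eq_mul_inv, mul_assoc, (c2 v).eq, ← mul_assoc]
  have h2ne : (2:ℍ) ≠ 0 := by
    have : ((2:ℝ):ℍ) ≠ 0 := by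
      rw [ne_eq, ← Quaternion.coe_zero, Quaternion.coe_inj]
      norm_num
    exact this
  rw [h2, h2, ← add_div, expand, eq_div_iff h2ne, mul_two, two_mul]
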